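/- Let k be a field and let F = F(k, X) be the free metabelian Lie algebra on a type X over k. Then for all x, y, z ∈ F: (1) if ⁅⁅x, y⁆, x⁆ = 0 and ⁅⁅x, y⁆, y⁆ = 0, then ⁅x, y⁆ = 0; (2) if ⁅x, y⁆ = 0, ⁅x, z⁆ = 0 and x ≠ 0, then ⁅y, z⁆ = 0. -/

import Mathlib

set_option synthInstance.maxHeartbeats 1000000
set_option maxHeartbeats 1000000

/-- The free metabelian Lie algebra on `X` over `k`: the quotient of the free Lie algebra
on `X` by its second derived ideal `⁅⁅L,L⁆,⁅L,L⁆⁆`. -/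
abbrev FreeMetabelianLie (k : Type*) (X : Type*) [CommRing k] :=
  FreeLieAlgebra k X ⧸ LieAlgebra.derivedSeries k (FreeLieAlgebra k X) 2

/-- The image in the free metabelian Lie algebra of the generator `x`. -/
noncomputable def fmGen (k : Type*) {X : Type*} [CommRing k] (x : X) :
    FreeMetabelianLie k X :=
  LieSubmodule.Quotient.mk' _ (FreeLieAlgebra.of k x)

namespace FMAux

open MvPolynomial

variable (k : Type*) (X : Type*) [Field k]

/-- The target of the Magnus-type embedding. -/
abbrev LL := (X →₀ k) × (X →₀ MvPolynomial X k)

/-- Inclusion of the degree-one part. -/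
noncomputable def iota : (X →₀ k) →ₗ[k] MvPolynomial X k :=
  Finsupp.linearCombination k (fun x => (MvPolynomial.X x : MvPolynomial X k))

@[simp] lemma iota_single (x : X) : iota k X (Finsupp.single x 1) = MvPolynomial.X x := by
  simp [iota]

noncomputable instance : Bracket (LL k X) (LL k X) :=
  ⟨fun p q => (0, iota k X p.1 • q.2 - iota k X q.1 • p.2)⟩

lemma br_def (p q : LL k X) :
    ⁅p, q⁆ = ((0 : X →₀ k), iota k X p.1 • q.2 - iota k X q.1 • p.2) := rfl

noncomputable instance : LieRing (LL k X) where
  add_lie p q r := by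
    simp only [br_def, Prod.fst_add, Prod.snd_add, map_add, add_smul, smul_add]
    ext <;> simp <;> abel
  lie_add p q r := by
    simp only [br_def, Prod.fst_add, Prod.snd_add, map_add, add_smul, smul_add]
    ext <;> simp <;> abel
  lie_self p := by simp only [br_def]; ext <;> simp
  leibniz_lie p q r := by
    simp only [br_def, map_zero, zero_smul, smul_sub, smul_smul, sub_zero, zero_sub, map_sub]
    ext <;> simp [mul_comm] <;> abel

noncomputable instance : LieAlgebra k (LL k X) where
  lie_smul t p q := by
    simp only [br_def, Prod.smul_fst, Prod.smul_snd, map_smul, Prod.smul_mk]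
    ext <;> simp [smul_comm t, mul_sub]

/-- The ideal of elements with vanishing first component. -/
def Z : LieIdeal k (LL k X) where
  carrier := {p | p.1 = 0}
  add_mem' := by intro a b ha hb; simp_all [Set.mem_setOf_eq, Prod.fst_add, ha, hb]
  zero_mem' := rfl
  smul_mem' := by intro c a ha; simp_all [Set.mem_setOf_eq]
  lie_mem := by intro x m _; rfl

lemma mem_Z_fst {p : LL k X} (h : p ∈ Z k X) : p.1 = 0 := h

lemma derived2_LL : LieAlgebra.derivedSeries k (LL k X) 2 = ⊥ := by
  have h1 : LieAlgebra.derivedSeries k (LL k X) 1 ≤ Z k X := by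
    rw [LieAlgebra.derivedSeries_def, LieAlgebra.derivedSeriesOfIdeal_succ,
      LieAlgebra.derivedSeriesOfIdeal_zero]
    rw [LieSubmodule.lie_le_iff]
    intro x _ m _
    exact rfl
  rw [eq_bot_iff, LieAlgebra.derivedSeries_def, LieAlgebra.derivedSeriesOfIdeal_succ,
    ← LieAlgebra.derivedSeries_def, LieSubmodule.lie_le_iff]
  intro x hx m hm
  have hx1 : x.1 = 0 := h1 hx
  have hm1 : m.1 = 0 := h1 hm
  have : ⁅x, m⁆ = (0 : LL k X) := by
    rw [br_def, hx1, hm1]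
    simp
  simp [this]

/-- The quotient map as a morphism of Lie algebras. -/
noncomputable def mkh : FreeLieAlgebra k X →ₗ⁅k⁆ FreeMetabelianLie k X :=
  { (LieAlgebra.derivedSeries k (FreeLieAlgebra k X) 2).toSubmodule.mkQ with
    map_lie' := fun {_ _} => rfl }

lemma mkh_surj : Function.Surjective (mkh k X) :=
  Submodule.mkQ_surjective _

lemma mkh_of (x : X) : mkh k X (FreeLieAlgebra.of k x) = fmGen k x := rfl

/-- The Magnus-type morphism from the free Lie algebra. -/
noncomputable def φ₀ : FreeLieAlgebra k X →ₗ⁅k⁆ LL k X :=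
  FreeLieAlgebra.lift k fun x => ((Finsupp.single x 1, Finsupp.single x 1) : LL k X)

lemma hker : ∀ a ∈ LieAlgebra.derivedSeries k (FreeLieAlgebra k X) 2,
    φ₀ k X a = 0 := by
  intro a ha
  have h := LieIdeal.derivedSeries_map_le (f := φ₀ k X) 2
  rw [derived2_LL, le_bot_iff] at h
  have : φ₀ k X a ∈ LieIdeal.map (φ₀ k X) (LieAlgebra.derivedSeries k (FreeLieAlgebra k X) 2) :=
    LieIdeal.mem_map ha
  rw [h] at this
  simpa using this

/-- The Magnus-type embedding of the free metabelian Lie algebra. -/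
noncomputable def φ : FreeMetabelianLie k X →ₗ⁅k⁆ LL k X :=
  { (LieAlgebra.derivedSeries k (FreeLieAlgebra k X) 2).toSubmodule.liftQ (φ₀ k X).toLinearMap
      (fun a ha => by simpa using hker k X a ha) with
    map_lie' := by
      intro u v
      obtain ⟨a, rfl⟩ := mkh_surj k X u
      obtain ⟨b, rfl⟩ := mkh_surj k X v
      show φ₀ k X ⁅a, b⁆ = ⁅φ₀ k X a, φ₀ k X b⁆
      exact (φ₀ k X).map_lie a b }

lemma φ_mk (a : FreeLieAlgebra k X) : φ k X (mkh k X a) = φ₀ k X a := rfl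

lemma φ_gen (x : X) : φ k X (fmGen k x) = (Finsupp.single x 1, Finsupp.single x 1) := by
  rw [← mkh_of, φ_mk, φ₀, FreeLieAlgebra.lift_of_apply]

/-- First component of the embedding (abelianization). -/
noncomputable def πl : FreeMetabelianLie k X →ₗ[k] (X →₀ k) :=
  (LinearMap.fst k _ _).comp (φ k X).toLinearMap

/-- Second component of the embedding. -/
noncomputable def τl : FreeMetabelianLie k X →ₗ[k] (X →₀ MvPolynomial X k) :=
  (LinearMap.snd k _ _).comp (φ k X).toLinearMap

lemma πl_gen (x : X) : πl k X (fmGen k x) = Finsupp.single x 1 := by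
  simp [πl, φ_gen]

lemma τl_gen (x : X) : τl k X (fmGen k x) = Finsupp.single x 1 := by
  simp [τl, φ_gen]

lemma πl_bracket (u v : FreeMetabelianLie k X) : πl k X ⁅u, v⁆ = 0 := by
  show (φ k X ⁅u, v⁆).1 = 0
  rw [LieHom.map_lie]; rfl

lemma τl_bracket (u v : FreeMetabelianLie k X) :
    τl k X ⁅u, v⁆ = iota k X (πl k X u) • τl k X v - iota k X (πl k X v) • τl k X u := by
  show (φ k X ⁅u, v⁆).2 = _
  rw [LieHom.map_lie]; rfl

/-- The derived ideal of the free metabelian Lie algebra. -/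
noncomputable abbrev N : LieIdeal k (FreeMetabelianLie k X) :=
  LieAlgebra.derivedSeries k (FreeMetabelianLie k X) 1

lemma derived_one_eq :
    LieAlgebra.derivedSeries k (FreeMetabelianLie k X) 1
      = ⁅(⊤ : LieIdeal k (FreeMetabelianLie k X)), (⊤ : LieIdeal k (FreeMetabelianLie k X))⁆ :=
  rfl

lemma derived_two_eq :
    LieAlgebra.derivedSeries k (FreeMetabelianLie k X) 2
      = ⁅(N k X), (N k X)⁆ :=
  rfl

lemma bracket_mem_N (u v : FreeMetabelianLie k X) : ⁅u, v⁆ ∈ N k X := by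
  exact (derived_one_eq k X).ge
    (LieSubmodule.lie_mem_lie (LieSubmodule.mem_top _) (LieSubmodule.mem_top _))

lemma derived2_F : LieAlgebra.derivedSeries k (FreeMetabelianLie k X) 2 = ⊥ := by
  have h := LieIdeal.derivedSeries_map_eq (f := mkh k X) 2 (mkh_surj k X)
  rw [← h, eq_bot_iff, LieIdeal.map_le_iff_le_comap]
  intro a ha
  rw [LieIdeal.mem_comap]
  have : mkh k X a = 0 := by
    show Submodule.Quotient.mk a = 0
    rw [Submodule.Quotient.mk_eq_zero]
    exact ha
  simp [this]

lemma metab {u v : FreeMetabelianLie k X} (hu : u ∈ N k X) (hv : v ∈ N k X) :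
    ⁅u, v⁆ = 0 := by
  have h2 : ⁅u, v⁆ ∈ LieAlgebra.derivedSeries k (FreeMetabelianLie k X) 2 :=
    (derived_two_eq k X).ge (LieSubmodule.lie_mem_lie hu hv)
  rw [derived2_F] at h2
  simpa using h2

/-- The quotient map to the abelianization, as a Lie morphism. -/
noncomputable def θ₁ : FreeMetabelianLie k X →ₗ⁅k⁆ (FreeMetabelianLie k X ⧸ N k X) :=
  { (LieSubmodule.Quotient.mk' (N k X)).toLinearMap with map_lie' := fun {_ _} => rfl }

lemma Q_abelian (p q : FreeMetabelianLie k X ⧸ N k X) : ⁅p, q⁆ = 0 := by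
  obtain ⟨a, rfl⟩ := LieSubmodule.Quotient.surjective_mk' (N k X) p
  obtain ⟨b, rfl⟩ := LieSubmodule.Quotient.surjective_mk' (N k X) q
  have h : ⁅LieSubmodule.Quotient.mk' (N k X) a, LieSubmodule.Quotient.mk' (N k X) b⁆
      = LieSubmodule.Quotient.mk' (N k X) ⁅a, b⁆ := rfl
  rw [h, LieSubmodule.Quotient.mk_eq_zero]
  exact bracket_mem_N k X a b

/-- Linear section of the abelianization. -/
noncomputable def σl : (X →₀ k) →ₗ[k] (FreeMetabelianLie k X ⧸ N k X) :=
  Finsupp.linearCombination k (fun x => LieSubmodule.Quotient.mk' (N k X) (fmGen k x))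

/-- The abelianization through `πl`. -/
noncomputable def θ₂ : FreeMetabelianLie k X →ₗ⁅k⁆ (FreeMetabelianLie k X ⧸ N k X) :=
  { (σl k X).comp (πl k X) with
    map_lie' := by
      intro u v
      show σl k X (πl k X ⁅u, v⁆) = _
      rw [πl_bracket, map_zero, Q_abelian] }

lemma θ_eq (u : FreeMetabelianLie k X) : θ₁ k X u = θ₂ k X u := by
  have h : (θ₁ k X).comp (mkh k X) = (θ₂ k X).comp (mkh k X) := by
    apply FreeLieAlgebra.hom_ext
    intro x
    show θ₁ k X (fmGen k x) = θ₂ k X (fmGen k x)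
    show LieSubmodule.Quotient.mk' (N k X) (fmGen k x) = σl k X (πl k X (fmGen k x))
    rw [πl_gen, σl, Finsupp.linearCombination_single, one_smul]
  obtain ⟨a, rfl⟩ := mkh_surj k X u
  exact LieHom.congr_fun h a

/-- The kernel of the abelianization map as a Lie ideal. -/
noncomputable def KI : LieIdeal k (FreeMetabelianLie k X) :=
  { LinearMap.ker (πl k X) with
    lie_mem := fun {x m} _ => LinearMap.mem_ker.mpr (πl_bracket k X x m) }

lemma mem_N_iff {u : FreeMetabelianLie k X} : u ∈ N k X ↔ πl k X u = 0 := by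
  constructor
  · intro h
    have hle : N k X ≤ KI k X := by
      refine le_trans (le_of_eq (derived_one_eq k X)) ?_
      rw [LieSubmodule.lie_le_iff]
      intro x _ m _
      exact LinearMap.mem_ker.mpr (πl_bracket k X x m)
    exact LinearMap.mem_ker.mp (hle h)
  · intro h
    have h1 : θ₂ k X u = 0 := by
      show σl k X (πl k X u) = 0
      rw [h, map_zero]
    have h2 : θ₁ k X u = 0 := by rw [θ_eq, h1]
    have h3 : LieSubmodule.Quotient.mk' (N k X) u = 0 := h2
    rwa [LieSubmodule.Quotient.mk_eq_zero] at h3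

/-- Bracketing with a generator, as an endomorphism of the derived ideal. -/
noncomputable def e (x : X) : Module.End k ↥(N k X).toSubmodule where
  toFun u := ⟨⁅fmGen k x, (u : FreeMetabelianLie k X)⁆, (N k X).lie_mem u.2⟩
  map_add' u v := Subtype.ext (by simp)
  map_smul' c u := Subtype.ext (by simp)

lemma ecomm (x y : X) : e k X x * e k X y = e k X y * e k X x := by
  ext u
  show ⁅fmGen k x, ⁅fmGen k y, (u : FreeMetabelianLie k X)⁆⁆
    = ⁅fmGen k y, ⁅fmGen k x, (u : FreeMetabelianLie k X)⁆⁆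
  rw [leibniz_lie]
  rw [metab k X (bracket_mem_N k X _ _) u.2, zero_add]

set_option synthInstance.maxHeartbeats 1000000 in
/-- The action of the polynomial ring on the derived ideal. -/
noncomputable def Ψ : MvPolynomial X k →ₐ[k] Module.End k ↥(N k X).toSubmodule :=
  letI : CommRing ↥(Algebra.adjoin k (Set.range (e k X))) :=
    Algebra.adjoinCommRingOfComm k (by rintro a ⟨x, rfl⟩ b ⟨y, rfl⟩; exact ecomm k X x y)
  (Algebra.adjoin k (Set.range (e k X))).val.comp
    (MvPolynomial.aeval fun x => (⟨e k X x, Algebra.subset_adjoin (Set.mem_range_self x)⟩ :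
      ↥(Algebra.adjoin k (Set.range (e k X)))))

set_option synthInstance.maxHeartbeats 1000000 in
@[simp] lemma Ψ_X (x : X) : Ψ k X (MvPolynomial.X x) = e k X x := by
  simp [Ψ]

/-- Brackets of generators inside the derived ideal. -/
noncomputable def bkt (x y : X) : ↥(N k X).toSubmodule :=
  ⟨⁅fmGen k x, fmGen k y⁆, bracket_mem_N k X _ _⟩

/-- Spanning set for the derived ideal. -/
def S₀ : Set (FreeMetabelianLie k X) :=
  {w | ∃ β x y, w = ↑(Ψ k X (monomial β 1) (bkt k X x y))}

/-- The derived ideal as a span. -/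
noncomputable def W : Submodule k (FreeMetabelianLie k X) := Submodule.span k (S₀ k X)

lemma W_le_N : W k X ≤ (N k X).toSubmodule := by
  rw [W, Submodule.span_le]
  rintro w ⟨β, x, y, rfl⟩
  exact SetLike.coe_mem _

lemma gen_bracket_W {w : FreeMetabelianLie k X} (z : X) (hw : w ∈ W k X) :
    ⁅fmGen k z, w⁆ ∈ W k X := by
  induction hw using Submodule.span_induction with
  | mem w hw =>
    obtain ⟨β, x, y, rfl⟩ := hw
    have h1 : ⁅fmGen k z, (↑(Ψ k X (monomial β 1) (bkt k X x y)) : FreeMetabelianLie k X)⁆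
        = ↑(e k X z (Ψ k X (monomial β 1) (bkt k X x y))) := rfl
    rw [h1]
    have h2 : e k X z (Ψ k X (monomial β 1) (bkt k X x y))
        = Ψ k X (monomial (Finsupp.single z 1 + β) 1) (bkt k X x y) := by
      rw [MvPolynomial.monomial_single_add, map_mul, pow_one, Ψ_X]
      rfl
    rw [h2]
    exact Submodule.subset_span ⟨_, _, _, rfl⟩
  | zero => simp [W]
  | add a b _ _ ha hb => rw [lie_add]; exact add_mem ha hb
  | smul c a _ ha => rw [lie_smul]; exact Submodule.smul_mem _ _ ha

lemma N_bracket_W {u w : FreeMetabelianLie k X} (hu : u ∈ (N k X).toSubmodule)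
    (hw : w ∈ W k X) : ⁅u, w⁆ = 0 :=
  metab k X hu (W_le_N k X hw)

/-- The span of the generators. -/
noncomputable def G : Submodule k (FreeMetabelianLie k X) :=
  Submodule.span k (Set.range (fmGen k (X := X)))

lemma G_bracket_G {a b : FreeMetabelianLie k X} (ha : a ∈ G k X) (hb : b ∈ G k X) :
    ⁅a, b⁆ ∈ W k X := by
  induction ha using Submodule.span_induction with
  | mem a ha =>
    obtain ⟨x, rfl⟩ := ha
    induction hb using Submodule.span_induction with
    | mem b hb =>
      obtain ⟨y, rfl⟩ := hb
      have h : ⁅fmGen k x, fmGen k y⁆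
          = ↑(Ψ k X (monomial 0 1) (bkt k X x y)) := by
        rw [MvPolynomial.monomial_zero', MvPolynomial.C_1, map_one]
        rfl
      rw [h]
      exact Submodule.subset_span ⟨_, _, _, rfl⟩
    | zero => simp
    | add a b _ _ ha hb => rw [lie_add]; exact add_mem ha hb
    | smul c a _ ha => rw [lie_smul]; exact Submodule.smul_mem _ _ ha
  | zero => simp
  | add a b _ _ ha hb => rw [add_lie]; exact add_mem ha hb
  | smul c a _ ha => rw [smul_lie]; exact Submodule.smul_mem _ _ ha

lemma G_bracket_W {a w : FreeMetabelianLie k X} (ha : a ∈ G k X) (hw : w ∈ W k X) :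
    ⁅a, w⁆ ∈ W k X := by
  induction ha using Submodule.span_induction with
  | mem a ha =>
    obtain ⟨z, rfl⟩ := ha
    exact gen_bracket_W k X z hw
  | zero => simp
  | add a b _ _ ha hb => rw [add_lie]; exact add_mem ha hb
  | smul c a _ ha => rw [smul_lie]; exact Submodule.smul_mem _ _ ha

lemma VW_bracket {a b : FreeMetabelianLie k X} (ha : a ∈ G k X ⊔ W k X)
    (hb : b ∈ G k X ⊔ W k X) : ⁅a, b⁆ ∈ W k X := by
  rw [Submodule.mem_sup] at ha hb
  obtain ⟨a1, ha1, w1, hw1, rfl⟩ := ha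
  obtain ⟨b1, hb1, w2, hw2, rfl⟩ := hb
  rw [add_lie, lie_add, lie_add]
  rw [N_bracket_W k X (W_le_N k X hw1) hw2]
  have h1 : ⁅w1, b1⁆ = -⁅b1, w1⁆ := by rw [lie_skew]
  rw [h1, add_zero]
  exact add_mem (add_mem (G_bracket_G k X ha1 hb1) (G_bracket_W k X ha1 hw2))
    (neg_mem (G_bracket_W k X hb1 hw1))

/-- `G ⊔ W` as a Lie subalgebra. -/
noncomputable def VS : LieSubalgebra k (FreeMetabelianLie k X) :=
  { G k X ⊔ W k X with
    lie_mem' := fun {a b} ha hb =>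
      Submodule.mem_sup_right (VW_bracket k X ha hb) }

lemma mem_VS (u : FreeMetabelianLie k X) : u ∈ VS k X := by
  have hgen : ∀ x : X, fmGen k x ∈ VS k X := fun x =>
    Submodule.mem_sup_left (Submodule.subset_span (Set.mem_range_self x))
  let ψ : FreeLieAlgebra k X →ₗ⁅k⁆ ↥(VS k X) :=
    FreeLieAlgebra.lift k fun x => (⟨fmGen k x, hgen x⟩ : ↥(VS k X))
  have h : (VS k X).incl.comp ψ = mkh k X := by
    apply FreeLieAlgebra.hom_ext
    intro x
    show ((VS k X).incl) (ψ (FreeLieAlgebra.of k x)) = fmGen k x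
    have : ψ (FreeLieAlgebra.of k x) = ⟨fmGen k x, hgen x⟩ :=
      FreeLieAlgebra.lift_of_apply _ x
    rw [this]
    rfl
  obtain ⟨a, rfl⟩ := mkh_surj k X u
  rw [← h]
  exact SetLike.coe_mem (ψ a)

lemma N_le_W : (N k X).toSubmodule ≤ W k X := by
  have hle : N k X ≤
      ({ W k X with
        lie_mem := fun {x m} hm => by
          have hx : x ∈ G k X ⊔ W k X := mem_VS k X x
          rw [Submodule.mem_sup] at hx
          obtain ⟨a, ha, w, hw, rfl⟩ := hx
          show ⁅a + w, m⁆ ∈ W k X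
          rw [add_lie, N_bracket_W k X (W_le_N k X hw) hm, add_zero]
          exact G_bracket_W k X ha hm } : LieIdeal k (FreeMetabelianLie k X)) := by
    refine le_trans (le_of_eq (derived_one_eq k X)) ?_
    rw [LieSubmodule.lie_le_iff]
    intro x _ m _
    exact VW_bracket k X (mem_VS k X x) (mem_VS k X m)
  exact fun u hu => hle hu

lemma mem_N_sub (u : ↥(N k X).toSubmodule) : πl k X ↑u = 0 :=
  (mem_N_iff k X).mp u.2

lemma tau_e (z : X) (u : ↥(N k X).toSubmodule) :
    τl k X ↑(e k X z u) = (MvPolynomial.X z : MvPolynomial X k) • τl k X ↑u := by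
  show τl k X ⁅fmGen k z, ↑u⁆ = _
  rw [τl_bracket, πl_gen, iota_single, mem_N_sub, map_zero, zero_smul, sub_zero]

lemma tau_Ψ (r : MvPolynomial X k) (u : ↥(N k X).toSubmodule) :
    τl k X ↑(Ψ k X r u) = r • τl k X ↑u := by
  induction r using MvPolynomial.induction_on generalizing u with
  | C a =>
    have h1 : Ψ k X (MvPolynomial.C a) = algebraMap k _ a := by
      rw [← MvPolynomial.algebraMap_eq, AlgHom.commutes]
    rw [h1, Module.algebraMap_end_apply]
    have h2 : ((a • u : ↥(N k X).toSubmodule) : FreeMetabelianLie k X) = a • ↑u := rfl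
    rw [h2, map_smul]
    rw [← MvPolynomial.algebraMap_eq, algebraMap_smul]
  | add p q hp hq =>
    have h1 : (↑(Ψ k X (p + q) u) : FreeMetabelianLie k X)
        = ↑(Ψ k X p u) + ↑(Ψ k X q u) := by
      rw [map_add (Ψ k X)]; rfl
    rw [h1, map_add, hp, hq, add_smul]
  | mul_X p z hp =>
    have h1 : Ψ k X (p * MvPolynomial.X z) u = Ψ k X p (e k X z u) := by
      rw [map_mul (Ψ k X), Ψ_X]; rfl
    rw [h1, hp, tau_e k X, smul_smul]

lemma tau_bkt (x y : X) :
    τl k X ↑(bkt k X x y)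
      = Finsupp.single y (MvPolynomial.X x) - Finsupp.single x (MvPolynomial.X y) := by
  show τl k X ⁅fmGen k x, fmGen k y⁆ = _
  rw [τl_bracket, πl_gen, πl_gen, iota_single, iota_single, τl_gen, τl_gen]
  rw [Finsupp.smul_single, Finsupp.smul_single, smul_eq_mul, smul_eq_mul, mul_one, mul_one]

lemma mon_mul_X (β : X →₀ ℕ) (x : X) :
    (monomial β (1 : k)) * MvPolynomial.X x = monomial (β + Finsupp.single x 1) 1 := by
  rw [MvPolynomial.monomial_add_single, pow_one]

lemma tau_gen_elt (β : X →₀ ℕ) (x y : X) :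
    τl k X ↑(Ψ k X (monomial β 1) (bkt k X x y))
      = Finsupp.single y (monomial (β + Finsupp.single x 1) 1)
        - Finsupp.single x (monomial (β + Finsupp.single y 1) 1) := by
  rw [tau_Ψ, tau_bkt, smul_sub, Finsupp.smul_single, Finsupp.smul_single,
    smul_eq_mul, smul_eq_mul, mon_mul_X, mon_mul_X]

section Order

variable [LinearOrder X]

/-- The contracting homotopy, on basis elements. -/
noncomputable def vmap (y : X) (β : X →₀ ℕ) : FreeMetabelianLie k X :=
  if h : β.support.Nonempty then
    if β.support.min' h < y then
      ↑(Ψ k X (monomial (β - Finsupp.single (β.support.min' h) 1) 1)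
        (bkt k X (β.support.min' h) y))
    else 0
  else 0

lemma vmap_eq_zero (y : X) (β : X →₀ ℕ) (h : ∀ m ∈ β.support, ¬ m < y) :
    vmap k X y β = 0 := by
  unfold vmap
  by_cases hne : β.support.Nonempty
  · rw [dif_pos hne, if_neg (h _ (β.support.min'_mem hne))]
  · rw [dif_neg hne]

lemma vmap_eq (y : X) (β : X →₀ ℕ) (m : X) (hm : m ∈ β.support) (hlt : m < y)
    (hmin : ∀ a ∈ β.support, m ≤ a) :
    vmap k X y β = ↑(Ψ k X (monomial (β - Finsupp.single m 1) 1) (bkt k X m y)) := by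
  have hne : β.support.Nonempty := ⟨m, hm⟩
  have hm' : β.support.min' hne = m :=
    le_antisymm (Finset.min'_le _ _ hm) (Finset.le_min' _ _ _ hmin)
  unfold vmap
  rw [dif_pos hne, hm', if_pos hlt]

/-- The contracting homotopy. -/
noncomputable def H : (X →₀ MvPolynomial X k) →ₗ[k] FreeMetabelianLie k X :=
  Finsupp.lsum k fun y => (MvPolynomial.basisMonomials X k).constr k (vmap k X y)

lemma H_single (y : X) (β : X →₀ ℕ) :
    H k X (Finsupp.single y (monomial β 1)) = vmap k X y β := by
  rw [H, Finsupp.lsum_single]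
  have h : (monomial β (1 : k)) = MvPolynomial.basisMonomials X k β := by
    rw [MvPolynomial.coe_basisMonomials]
  rw [h, Module.Basis.constr_basis]

lemma mem_support_add_single (β : X →₀ ℕ) (x a : X) :
    a ∈ (β + Finsupp.single x 1).support ↔ a ∈ β.support ∨ a = x := by
  simp only [Finsupp.mem_support_iff, Finsupp.add_apply, Finsupp.single_apply]
  rcases eq_or_ne x a with rfl | h
  · simp
  · simp [h, Ne.symm h]

lemma single_le_of_mem (β : X →₀ ℕ) (m : X) (hm : m ∈ β.support) :
    Finsupp.single m 1 ≤ β := by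
  rw [Finsupp.single_le_iff]
  exact Nat.one_le_iff_ne_zero.mpr (Finsupp.mem_support_iff.mp hm)

lemma sub_single_add (β : X →₀ ℕ) (m x : X) (hm : m ∈ β.support) :
    β + Finsupp.single x 1 - Finsupp.single m 1
      = (β - Finsupp.single m 1) + Finsupp.single x 1 := by
  have hle : Finsupp.single m 1 ≤ β := by
    rw [Finsupp.single_le_iff]
    exact Nat.one_le_iff_ne_zero.mpr (Finsupp.mem_support_iff.mp hm)
  rw [add_comm β, add_tsub_assoc_of_le hle, add_comm]

lemma single_add_sub (β : X →₀ ℕ) (m : X) (hm : m ∈ β.support) :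
    Finsupp.single m 1 + (β - Finsupp.single m 1) = β := by
  have hle : Finsupp.single m 1 ≤ β := by
    rw [Finsupp.single_le_iff]
    exact Nat.one_le_iff_ne_zero.mpr (Finsupp.mem_support_iff.mp hm)
  rw [add_tsub_cancel_of_le hle]

lemma bkt_skew (x y : X) : bkt k X y x = - bkt k X x y :=
  Subtype.ext (by simp [bkt])

lemma jacobi_bkt (m x y : X) :
    e k X x (bkt k X m y) - e k X y (bkt k X m x) = e k X m (bkt k X x y) := by
  apply Subtype.ext
  show ⁅fmGen k x, ⁅fmGen k m, fmGen k y⁆⁆ - ⁅fmGen k y, ⁅fmGen k m, fmGen k x⁆⁆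
    = ⁅fmGen k m, ⁅fmGen k x, fmGen k y⁆⁆
  rw [leibniz_lie (fmGen k m) (fmGen k x) (fmGen k y)]
  have h : ⁅⁅fmGen k m, fmGen k x⁆, fmGen k y⁆ = -⁅fmGen k y, ⁅fmGen k m, fmGen k x⁆⁆ :=
    (lie_skew _ _).symm
  rw [h]
  abel

lemma psi_mon_single (γ : X →₀ ℕ) (x : X) (b : ↥(N k X).toSubmodule) :
    Ψ k X (monomial (γ + Finsupp.single x 1) 1) b
      = Ψ k X (monomial γ 1) (e k X x b) := by
  rw [← mon_mul_X, map_mul (Ψ k X), Ψ_X]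
  rfl

lemma key_lt (x y : X) (β : X →₀ ℕ) (hyx : y < x) :
    vmap k X y (β + Finsupp.single x 1) - vmap k X x (β + Finsupp.single y 1)
      = ↑(Ψ k X (monomial β 1) (bkt k X x y)) := by
  by_cases hy : ∃ m ∈ β.support, m < y
  · obtain ⟨m, hm, hmy⟩ := hy
    set m0 := β.support.min' ⟨m, hm⟩ with hm0def
    have hm0mem : m0 ∈ β.support := β.support.min'_mem _
    have hm0le : ∀ a ∈ β.support, m0 ≤ a := fun a ha => Finset.min'_le _ _ ha
    have hm0y : m0 < y := lt_of_le_of_lt (hm0le m hm) hmy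
    have hm0x : m0 < x := lt_trans hm0y hyx
    have h1 : vmap k X y (β + Finsupp.single x 1)
        = ↑(Ψ k X (monomial (β + Finsupp.single x 1 - Finsupp.single m0 1) 1)
            (bkt k X m0 y)) := by
      apply vmap_eq
      · exact (mem_support_add_single _ β x m0).mpr (Or.inl hm0mem)
      · exact hm0y
      · intro a ha
        rcases (mem_support_add_single _ β x a).mp ha with h | rfl
        · exact hm0le a h
        · exact le_of_lt hm0x
    have h2 : vmap k X x (β + Finsupp.single y 1)
        = ↑(Ψ k X (monomial (β + Finsupp.single y 1 - Finsupp.single m0 1) 1)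
            (bkt k X m0 x)) := by
      apply vmap_eq
      · exact (mem_support_add_single _ β y m0).mpr (Or.inl hm0mem)
      · exact hm0x
      · intro a ha
        rcases (mem_support_add_single _ β y a).mp ha with h | rfl
        · exact hm0le a h
        · exact le_of_lt hm0y
    rw [h1, h2, sub_single_add _ β m0 x hm0mem, sub_single_add _ β m0 y hm0mem,
      psi_mon_single, psi_mon_single, ← AddSubgroupClass.coe_sub, ← map_sub, jacobi_bkt]
    have h3 : Ψ k X (monomial (β - Finsupp.single m0 1) 1) (e k X m0 (bkt k X x y))
        = Ψ k X (monomial β 1) (bkt k X x y) := by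
      have h4 : (monomial (β - Finsupp.single m0 1) (1:k)) * MvPolynomial.X m0
          = monomial β 1 := by
        rw [mon_mul_X, tsub_add_cancel_of_le (single_le_of_mem X β m0 hm0mem)]
      rw [← h4, map_mul (Ψ k X), Ψ_X]
      rfl
    rw [h3]
  · push_neg at hy
    have h1 : vmap k X y (β + Finsupp.single x 1) = 0 := by
      apply vmap_eq_zero
      intro a ha
      rcases (mem_support_add_single _ β x a).mp ha with h | rfl
      · exact not_lt_of_ge (hy a h)
      · exact not_lt_of_ge (le_of_lt hyx)
    have h2 : vmap k X x (β + Finsupp.single y 1)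
        = ↑(Ψ k X (monomial β 1) (bkt k X y x)) := by
      have h3 := vmap_eq k X x (β + Finsupp.single y 1) y
        ((mem_support_add_single _ β y y).mpr (Or.inr rfl)) hyx
        (by
          intro a ha
          rcases (mem_support_add_single _ β y a).mp ha with h | rfl
          · exact hy a h
          · exact le_refl _)
      rw [h3, add_tsub_cancel_right]
    rw [h1, h2, bkt_skew k X y x, map_neg]
    push_cast
    rw [zero_sub]

lemma key (x y : X) (β : X →₀ ℕ) :
    vmap k X y (β + Finsupp.single x 1) - vmap k X x (β + Finsupp.single y 1)
      = ↑(Ψ k X (monomial β 1) (bkt k X x y)) := by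
  rcases lt_trichotomy x y with hxy | rfl | hyx
  · have h := key_lt k X y x β hxy
    have h2 : vmap k X y (β + Finsupp.single x 1) - vmap k X x (β + Finsupp.single y 1)
        = -(vmap k X x (β + Finsupp.single y 1) - vmap k X y (β + Finsupp.single x 1)) := by
      abel
    rw [h2, h, bkt_skew k X x y, map_neg]
    simp
  · have hb : bkt k X x x = 0 := Subtype.ext (by simp [bkt])
    rw [hb, map_zero, sub_self]
    simp
  · exact key_lt k X x y β hyx

lemma retract {u : FreeMetabelianLie k X} (hu : u ∈ W k X) : H k X (τl k X u) = u := by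
  induction hu using Submodule.span_induction with
  | mem w hw =>
    obtain ⟨β, x, y, rfl⟩ := hw
    rw [tau_gen_elt, map_sub, H_single, H_single, key]
  | zero => simp
  | add a b _ _ ha hb => rw [map_add, map_add, ha, hb]
  | smul c a _ ha => rw [map_smul, map_smul, ha]

lemma tau_inj {u : FreeMetabelianLie k X} (hu : u ∈ N k X)
    (h : τl k X u = 0) : u = 0 := by
  have hr := retract k X (N_le_W k X hu)
  rw [h, map_zero] at hr
  exact hr.symm

end Order

lemma iota_coeff (a : X →₀ k) (y : X) :
    MvPolynomial.coeff (Finsupp.single y 1) (iota k X a) = a y := by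
  induction a using Finsupp.induction_linear with
  | zero => simp
  | add f g hf hg => rw [map_add, MvPolynomial.coeff_add, hf, hg, Finsupp.add_apply]
  | single x c =>
    classical
    rw [iota, Finsupp.linearCombination_single, MvPolynomial.coeff_smul]
    rcases eq_or_ne x y with rfl | h
    · simp
    · rw [MvPolynomial.coeff_X', if_neg, Finsupp.single_eq_of_ne h.symm]
      · simp
      · intro hc
        exact h ((Finsupp.single_left_inj one_ne_zero).mp hc)

lemma iota_eq_zero {a : X →₀ k} (h : iota k X a = 0) : a = 0 := by
  ext y
  have hc := congrArg (MvPolynomial.coeff (Finsupp.single y 1)) h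
  rw [iota_coeff] at hc
  simpa using hc

lemma smul_eq_zero_cases (r : MvPolynomial X k) (t : X →₀ MvPolynomial X k)
    (h : r • t = 0) : r = 0 ∨ t = 0 := by
  by_cases ht : t = 0
  · exact Or.inr ht
  · left
    obtain ⟨j, hj⟩ : ∃ j, t j ≠ 0 := by
      by_contra hc
      push_neg at hc
      exact ht (Finsupp.ext hc)
    have h2 : r * t j = 0 := by
      have h3 := congrArg (fun f => f j) h
      simpa [Finsupp.smul_apply] using h3
    exact (mul_eq_zero.mp h2).resolve_right hj

end FMAux

/-- In a free metabelian Lie algebra: (1) if `⁅⁅x,y⁆,x⁆ = 0` and `⁅⁅x,y⁆,y⁆ = 0` then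
`⁅x,y⁆ = 0`; (2) if `⁅x,y⁆ = 0`, `⁅x,z⁆ = 0` and `x ≠ 0` then `⁅y,z⁆ = 0`. -/
theorem freeMetabelian_bracket_properties {k X : Type*} [Field k]
    (x y z : FreeMetabelianLie k X) :
    (⁅⁅x, y⁆, x⁆ = 0 → ⁅⁅x, y⁆, y⁆ = 0 → ⁅x, y⁆ = 0) ∧
    (⁅x, y⁆ = 0 → ⁅x, z⁆ = 0 → x ≠ 0 → ⁅y, z⁆ = 0) := by
  letI : LinearOrder X := WellOrderingRel.isWellOrder.linearOrder
  open FMAux in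
  refine ⟨?_, ?_⟩
  · intro h1 h2
    have hπu : πl k X ⁅x, y⁆ = 0 := πl_bracket k X x y
    have key1 : ∀ w : FreeMetabelianLie k X, ⁅⁅x, y⁆, w⁆ = 0 →
        iota k X (πl k X w) = 0 ∨ τl k X ⁅x, y⁆ = 0 := by
      intro w hw
      have ht : τl k X ⁅⁅x, y⁆, w⁆ = 0 := by rw [hw, map_zero]
      rw [τl_bracket, hπu, map_zero, zero_smul, zero_sub, neg_eq_zero] at ht
      exact smul_eq_zero_cases k X _ _ ht
    rcases key1 x h1 with hx | hτ
    · rcases key1 y h2 with hy | hτ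
      · have hxN : x ∈ N k X := (mem_N_iff k X).mpr (iota_eq_zero k X hx)
        have hyN : y ∈ N k X := (mem_N_iff k X).mpr (iota_eq_zero k X hy)
        exact metab k X hxN hyN
      · exact tau_inj k X (bracket_mem_N k X x y) hτ
    · exact tau_inj k X (bracket_mem_N k X x y) hτ
  · intro hxy hxz hx0
    by_cases hπx : πl k X x = 0
    · have hxN : x ∈ N k X := (mem_N_iff k X).mpr hπx
      have hτx : τl k X x ≠ 0 := fun h => hx0 (tau_inj k X hxN h)
      have habel : ∀ w : FreeMetabelianLie k X, ⁅x, w⁆ = 0 → w ∈ N k X := by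
        intro w hw
        have ht : τl k X ⁅x, w⁆ = 0 := by rw [hw, map_zero]
        rw [τl_bracket, hπx, map_zero, zero_smul, zero_sub, neg_eq_zero] at ht
        rcases smul_eq_zero_cases k X _ _ ht with h | h
        · exact (mem_N_iff k X).mpr (iota_eq_zero k X h)
        · exact absurd h hτx
      exact metab k X (habel y hxy) (habel z hxz)
    · have hlz : ⁅x, ⁅y, z⁆⁆ = 0 := by
        rw [leibniz_lie, hxy, hxz, zero_lie, lie_zero, add_zero]
      have hux : ⁅⁅y, z⁆, x⁆ = 0 := by
        rw [← lie_skew, hlz, neg_zero]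
      have hπu : πl k X ⁅y, z⁆ = 0 := πl_bracket k X y z
      have ht : τl k X ⁅⁅y, z⁆, x⁆ = 0 := by rw [hux, map_zero]
      rw [τl_bracket, hπu, map_zero, zero_smul, zero_sub, neg_eq_zero] at ht
      rcases smul_eq_zero_cases k X _ _ ht with h | h
      · exact absurd (iota_eq_zero k X h) hπx
      · exact tau_inj k X (bracket_mem_N k X y z) h
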